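/- (Proposition 2, non-convex case.) Let f : ℝⁿ → ℝ be differentiable, coordinatewise L-smooth for some L ∈ ℝⁿ with all entries Lᵢ > 0, and bounded below by f* ∈ ℝ (f(x) ≥ f* for all x). Let θ(t), t = 0, …, T, be generated by the stochastic MTSL iteration from a deterministic initial point θ(0), satisfying for every t ∈ {0,…,T−1}: unbiasedness E[g̃(t) | ℱ_t] = ∇f(θ(t)) almost surely and second-moment bound E[‖g̃(t)‖²] ≤ G². Assume f(θ(t)) and ‖∇f(θ(t))‖² are integrable for all t, and write L_max = maxᵢ Lᵢ. Then min_{0 ≤ t ≤ T−1} E[ ‖∇f(θ(t))‖² ] ≤ ( f(θ(0)) − f* + (L_max G² / 2) Σ_{t=0}^{T−1} η_max(t)² ) / ( Σ_{t=0}^{T−1} η_min(t) ). -/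

import Mathlib

open MeasureTheory Finset

/-- The `i`-th partial derivative of `f : ℝⁿ → ℝ` at `x`. -/
noncomputable def pderiv' {n : ℕ} (f : (Fin n → ℝ) → ℝ) (i : Fin n) (x : Fin n → ℝ) : ℝ :=
  fderiv ℝ f x (Pi.single i 1)

lemma condexp_pi_apply' {n : ℕ} {Ω : Type*} {m m0 : MeasurableSpace Ω} (hm : m ≤ m0)
    {μ : Measure Ω} [IsFiniteMeasure μ] {g : Ω → Fin n → ℝ} (hg : Integrable g μ) (i : Fin n) :
    (μ[fun ω => g ω i | m]) =ᵐ[μ] fun ω => (μ[g|m]) ω i := by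
  have hgi : Integrable (fun ω => g ω i) μ :=
    (ContinuousLinearMap.proj (R := ℝ) (φ := fun _ : Fin n => ℝ) i).integrable_comp hg
  have hci : Integrable (fun ω => (μ[g|m]) ω i) μ :=
    (ContinuousLinearMap.proj (R := ℝ) (φ := fun _ : Fin n => ℝ) i).integrable_comp
      integrable_condExp
  have hmeas : Measurable[m] (μ[g|m]) := stronglyMeasurable_condExp.measurable
  have hmi : Measurable[m] fun ω => (μ[g|m]) ω i := (measurable_pi_apply i).comp hmeas
  have hsm : AEStronglyMeasurable[m] (fun ω => (μ[g|m]) ω i) μ :=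
    hmi.stronglyMeasurable.aestronglyMeasurable
  refine (ae_eq_condExp_of_forall_setIntegral_eq hm hgi
    (fun s _ _ => hci.integrableOn) (fun s hs hμs => ?_) hsm).symm
  have h1 := ContinuousLinearMap.integral_comp_comm
    (ContinuousLinearMap.proj (R := ℝ) (φ := fun _ : Fin n => ℝ) i) (φ := μ[g|m])
    (μ := μ.restrict s) integrable_condExp.integrableOn
  have h2 := ContinuousLinearMap.integral_comp_comm
    (ContinuousLinearMap.proj (R := ℝ) (φ := fun _ : Fin n => ℝ) i) (φ := g)
    (μ := μ.restrict s) hg.integrableOn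
  simp only [ContinuousLinearMap.proj_apply] at h1 h2
  rw [h1, h2, setIntegral_condExp hm hg hs]

theorem mtsl_sgd_nonconvex_rate {n : ℕ} [NeZero n] {Ω : Type*} {m0 : MeasurableSpace Ω}
    (μ : Measure Ω) [IsProbabilityMeasure μ]
    (𝓕 : Filtration ℕ m0)
    (f : (Fin n → ℝ) → ℝ) (L : Fin n → ℝ)
    (hdiff : Differentiable ℝ f)
    (hL : ∀ i, 0 < L i)
    (hsmooth : ∀ x y : Fin n → ℝ,
      f y ≤ f x + (∑ i, pderiv' f i x * (y i - x i)) + (1 / 2) * ∑ i, L i * (y i - x i) ^ 2)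
    (fstar : ℝ) (hbdd : ∀ x, fstar ≤ f x)
    (η : ℕ → Fin n → ℝ) (hη : ∀ t i, 0 < η t i)
    (G : ℝ) (T : ℕ) (hT : 1 ≤ T)
    (θ : ℕ → Ω → Fin n → ℝ) (gt : ℕ → Ω → Fin n → ℝ)
    (θinit : Fin n → ℝ) (hθ0 : ∀ ω, θ 0 ω = θinit)
    (hadapted : Adapted 𝓕 θ)
    (hupdate : ∀ t ω, θ (t + 1) ω = fun i => θ t ω i - η t i * gt t ω i)
    (hgt2 : ∀ t, MemLp (gt t) 2 μ)
    (hunbiased : ∀ t < T, μ[gt t | 𝓕 t] =ᵐ[μ] fun ω => fun i => pderiv' f i (θ t ω))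
    (hG : ∀ t < T, ∫ ω, ∑ i, (gt t ω i) ^ 2 ∂μ ≤ G ^ 2)
    (hfint : ∀ t, Integrable (fun ω => f (θ t ω)) μ)
    (hgradint : ∀ t, Integrable (fun ω => ∑ i, (pderiv' f i (θ t ω)) ^ 2) μ) :
    (Finset.range T).inf' (Finset.nonempty_range_iff.mpr (by omega))
        (fun t => ∫ ω, ∑ i, (pderiv' f i (θ t ω)) ^ 2 ∂μ) ≤
      (f θinit - fstar
          + ((Finset.univ.sup' Finset.univ_nonempty L) * G ^ 2 / 2) *
              ∑ t ∈ Finset.range T, (Finset.univ.sup' Finset.univ_nonempty (η t)) ^ 2)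
        / (∑ t ∈ Finset.range T, Finset.univ.inf' Finset.univ_nonempty (η t)) := by
  classical
  set Lmax : ℝ := Finset.univ.sup' Finset.univ_nonempty L with hLmaxdef
  set E : ℕ → ℝ := fun t => ∫ ω, ∑ i, (pderiv' f i (θ t ω)) ^ 2 ∂μ with hEdef
  have hLmaxpos : 0 < Lmax := by
    obtain ⟨i, _⟩ := Finset.univ_nonempty (α := Fin n)
    exact lt_of_lt_of_le (hL i) (Finset.le_sup' L (mem_univ i))
  have hθmeas : ∀ t, Measurable[𝓕 t] (θ t) := fun t => hadapted t
  have hDmeas : ∀ t i, Measurable[𝓕 t] fun ω => pderiv' f i (θ t ω) := fun t i =>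
    (measurable_fderiv_apply_const ℝ f (Pi.single i 1)).comp (hθmeas t)
  have hDmeas0 : ∀ t i, Measurable fun ω => pderiv' f i (θ t ω) := fun t i =>
    ((hDmeas t i).mono (𝓕.le t) le_rfl)
  have hD2int : ∀ t i, Integrable (fun ω => (pderiv' f i (θ t ω)) ^ 2) μ := by
    intro t i
    refine (hgradint t).mono' ((hDmeas0 t i).pow_const 2).aestronglyMeasurable ?_
    filter_upwards with ω
    rw [Real.norm_eq_abs, abs_of_nonneg (sq_nonneg _)]
    exact Finset.single_le_sum (f := fun j => (pderiv' f j (θ t ω)) ^ 2)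
      (fun j _ => sq_nonneg _) (mem_univ i)
  have hgiL2 : ∀ t i, MemLp (fun ω => gt t ω i) 2 μ := fun t i =>
    (ContinuousLinearMap.proj (R := ℝ) (φ := fun _ : Fin n => ℝ) i).comp_memLp' (hgt2 t)
  have hg2int : ∀ t i, Integrable (fun ω => (gt t ω i) ^ 2) μ := fun t i =>
    (hgiL2 t i).integrable_sq
  have hmulint : ∀ t i, Integrable (fun ω => pderiv' f i (θ t ω) * gt t ω i) μ := by
    intro t i
    refine ((hD2int t i).add (hg2int t i)).mono'
      ((hDmeas0 t i).aestronglyMeasurable.mul (hgiL2 t i).aestronglyMeasurable) ?_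
    filter_upwards with ω
    rw [Real.norm_eq_abs]
    refine abs_le.mpr ⟨?_, ?_⟩ <;> simp only [Pi.add_apply] <;>
      nlinarith [sq_nonneg (pderiv' f i (θ t ω) + gt t ω i),
        sq_nonneg (pderiv' f i (θ t ω) - gt t ω i)]
  -- pull-out property
  have hkey : ∀ t, t < T → ∀ i, ∫ ω, pderiv' f i (θ t ω) * gt t ω i ∂μ
      = ∫ ω, (pderiv' f i (θ t ω)) ^ 2 ∂μ := by
    intro t ht i
    have hm := 𝓕.le t
    have hce : μ[fun ω => gt t ω i | 𝓕 t] =ᵐ[μ] fun ω => pderiv' f i (θ t ω) := by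
      refine (condexp_pi_apply' hm ((hgt2 t).integrable one_le_two) i).trans ?_
      filter_upwards [hunbiased t ht] with ω hω
      rw [hω]
    have hsm : StronglyMeasurable[𝓕 t] fun ω => pderiv' f i (θ t ω) :=
      (hDmeas t i).stronglyMeasurable
    have hpull := condExp_mul_of_stronglyMeasurable_left (μ := μ) hsm
      (hmulint t i) (((hgiL2 t i).integrable one_le_two))
    calc ∫ ω, pderiv' f i (θ t ω) * gt t ω i ∂μ
        = ∫ ω, (μ[(fun ω => pderiv' f i (θ t ω)) * (fun ω => gt t ω i)|𝓕 t]) ω ∂μ :=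
          (integral_condExp hm).symm
      _ = ∫ ω, pderiv' f i (θ t ω) * (μ[fun ω => gt t ω i|𝓕 t]) ω ∂μ :=
          integral_congr_ae hpull
      _ = ∫ ω, (pderiv' f i (θ t ω)) ^ 2 ∂μ := by
          refine integral_congr_ae ?_
          filter_upwards [hce] with ω h
          rw [h]; ring
  -- one-step inequality
  have hstep : ∀ t, t < T →
      ∫ ω, f (θ (t + 1) ω) ∂μ + (Finset.univ.inf' Finset.univ_nonempty (η t)) * E t
        ≤ (∫ ω, f (θ t ω) ∂μ)
          + (Lmax * G ^ 2 / 2) * (Finset.univ.sup' Finset.univ_nonempty (η t)) ^ 2 := by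
    intro t ht
    set ηmin : ℝ := Finset.univ.inf' Finset.univ_nonempty (η t) with hηmin
    set ηmax : ℝ := Finset.univ.sup' Finset.univ_nonempty (η t) with hηmax
    have hηminpos : 0 < ηmin := (Finset.lt_inf'_iff _).mpr (fun i _ => hη t i)
    have hηmaxi : ∀ i, η t i ≤ ηmax := fun i => Finset.le_sup' (η t) (mem_univ i)
    have hηmaxpos : 0 < ηmax := lt_of_lt_of_le (hη t 0) (hηmaxi 0)
    have hpt : ∀ ω, f (θ (t + 1) ω) ≤ f (θ t ω)
        - ∑ i, η t i * (pderiv' f i (θ t ω) * gt t ω i)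
        + ∑ i, (L i * η t i ^ 2 / 2) * (gt t ω i) ^ 2 := by
      intro ω
      have h1 := hsmooth (θ t ω) (θ (t + 1) ω)
      have e1 : ∑ i, pderiv' f i (θ t ω) * (θ (t + 1) ω i - θ t ω i)
          = - ∑ i, η t i * (pderiv' f i (θ t ω) * gt t ω i) := by
        rw [← Finset.sum_neg_distrib]
        refine Finset.sum_congr rfl fun i _ => ?_
        rw [hupdate t ω]; ring
      have e2 : (1 / 2 : ℝ) * ∑ i, L i * (θ (t + 1) ω i - θ t ω i) ^ 2
          = ∑ i, (L i * η t i ^ 2 / 2) * (gt t ω i) ^ 2 := by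
        rw [Finset.mul_sum]
        refine Finset.sum_congr rfl fun i _ => ?_
        rw [hupdate t ω]; ring
      linarith
    have hint1 : Integrable (fun ω => ∑ i, η t i * (pderiv' f i (θ t ω) * gt t ω i)) μ :=
      integrable_finset_sum _ (fun i _ => (hmulint t i).const_mul _)
    have hint2 : Integrable (fun ω => ∑ i, (L i * η t i ^ 2 / 2) * (gt t ω i) ^ 2) μ :=
      integrable_finset_sum _ (fun i _ => (hg2int t i).const_mul _)
    have hint : ∫ ω, f (θ (t + 1) ω) ∂μ
        ≤ ∫ ω, (f (θ t ω) - ∑ i, η t i * (pderiv' f i (θ t ω) * gt t ω i)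
            + ∑ i, (L i * η t i ^ 2 / 2) * (gt t ω i) ^ 2) ∂μ :=
      integral_mono (hfint (t + 1)) (((hfint t).sub hint1).add hint2) hpt
    have hAB : Integrable (fun ω => f (θ t ω)
        - ∑ i, η t i * (pderiv' f i (θ t ω) * gt t ω i)) μ := (hfint t).sub hint1
    rw [integral_add hAB hint2, integral_sub (hfint t) hint1,
      integral_finset_sum _ (fun i _ => (hmulint t i).const_mul _),
      integral_finset_sum _ (fun i _ => (hg2int t i).const_mul _)] at hint
    simp only [MeasureTheory.integral_const_mul] at hint
    have hS1 : ηmin * E t ≤ ∑ i, η t i * ∫ ω, pderiv' f i (θ t ω) * gt t ω i ∂μ := by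
      have hEt : E t = ∑ i, ∫ ω, (pderiv' f i (θ t ω)) ^ 2 ∂μ := by
        rw [hEdef]
        exact integral_finset_sum _ (fun i _ => hD2int t i)
      rw [hEt, Finset.mul_sum]
      refine Finset.sum_le_sum fun i _ => ?_
      rw [hkey t ht i]
      refine mul_le_mul_of_nonneg_right (Finset.inf'_le (η t) (mem_univ i))
        (integral_nonneg fun ω => sq_nonneg _)
    have hS2 : ∑ i, (L i * η t i ^ 2 / 2) * ∫ ω, (gt t ω i) ^ 2 ∂μ
        ≤ (Lmax * G ^ 2 / 2) * ηmax ^ 2 := by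
      have hsum : ∑ i, ∫ ω, (gt t ω i) ^ 2 ∂μ = ∫ ω, ∑ i, (gt t ω i) ^ 2 ∂μ :=
        (integral_finset_sum _ (fun i _ => hg2int t i)).symm
      have step1 : ∑ i, (L i * η t i ^ 2 / 2) * ∫ ω, (gt t ω i) ^ 2 ∂μ
          ≤ ∑ i, (Lmax * ηmax ^ 2 / 2) * ∫ ω, (gt t ω i) ^ 2 ∂μ := by
        refine Finset.sum_le_sum fun i _ => ?_
        refine mul_le_mul_of_nonneg_right ?_ (integral_nonneg fun ω => sq_nonneg _)
        have h1 : L i ≤ Lmax := Finset.le_sup' L (mem_univ i)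
        have h2 : η t i ^ 2 ≤ ηmax ^ 2 := by
          have := hηmaxi i
          nlinarith [hη t i]
        nlinarith [hL i, sq_nonneg (η t i)]
      refine step1.trans ?_
      rw [← Finset.mul_sum, hsum]
      have hc : (0:ℝ) ≤ Lmax * ηmax ^ 2 / 2 := by positivity
      have h3 := mul_le_mul_of_nonneg_left (hG t ht) hc
      refine h3.trans_eq ?_
      ring
    calc ∫ ω, f (θ (t + 1) ω) ∂μ + ηmin * E t
        ≤ (∫ ω, f (θ t ω) ∂μ)
            - (∑ i, η t i * ∫ ω, pderiv' f i (θ t ω) * gt t ω i ∂μ)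
            + (∑ i, (L i * η t i ^ 2 / 2) * ∫ ω, (gt t ω i) ^ 2 ∂μ) + ηmin * E t := by
          linarith
      _ ≤ (∫ ω, f (θ t ω) ∂μ) + (Lmax * G ^ 2 / 2) * ηmax ^ 2 := by linarith
  -- telescoping
  have htel : ∀ k, k ≤ T →
      ∫ ω, f (θ k ω) ∂μ
        + ∑ t ∈ Finset.range k, (Finset.univ.inf' Finset.univ_nonempty (η t)) * E t
      ≤ f θinit + (Lmax * G ^ 2 / 2)
          * ∑ t ∈ Finset.range k, (Finset.univ.sup' Finset.univ_nonempty (η t)) ^ 2 := by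
    intro k hk
    induction k with
    | zero => simp [hθ0]
    | succ k ih =>
      have hk' : k < T := hk
      have h1 := hstep k hk'
      have h2 := ih (le_of_lt hk')
      rw [Finset.sum_range_succ, Finset.sum_range_succ]
      linarith
  have hfT : fstar ≤ ∫ ω, f (θ T ω) ∂μ := by
    have h := integral_mono (integrable_const fstar) (hfint T) (fun ω => hbdd (θ T ω))
    simpa using h
  have hfin : ∑ t ∈ Finset.range T, (Finset.univ.inf' Finset.univ_nonempty (η t)) * E t
      ≤ f θinit - fstar + (Lmax * G ^ 2 / 2)
          * ∑ t ∈ Finset.range T, (Finset.univ.sup' Finset.univ_nonempty (η t)) ^ 2 := by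
    have := htel T le_rfl
    linarith
  have hS : 0 < ∑ t ∈ Finset.range T, Finset.univ.inf' Finset.univ_nonempty (η t) :=
    Finset.sum_pos (fun t _ => (Finset.lt_inf'_iff _).mpr (fun i _ => hη t i))
      (Finset.nonempty_range_iff.mpr (by omega))
  rw [le_div_iff₀ hS]
  calc ((range T).inf' (Finset.nonempty_range_iff.mpr (by omega)) E)
        * ∑ t ∈ Finset.range T, Finset.univ.inf' Finset.univ_nonempty (η t)
      = ∑ t ∈ Finset.range T, (Finset.univ.inf' Finset.univ_nonempty (η t))
          * ((range T).inf' (Finset.nonempty_range_iff.mpr (by omega)) E) := by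
        rw [Finset.mul_sum]
        exact Finset.sum_congr rfl fun t _ => mul_comm _ _
    _ ≤ ∑ t ∈ Finset.range T, (Finset.univ.inf' Finset.univ_nonempty (η t)) * E t := by
        refine Finset.sum_le_sum fun t htm => ?_
        exact mul_le_mul_of_nonneg_left (Finset.inf'_le E htm)
          (le_of_lt ((Finset.lt_inf'_iff _).mpr (fun i _ => hη t i)))
    _ ≤ _ := hfin
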